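/- Let G be a tricyclic graph (a connected simple graph on n ≥ 5 vertices with n+2 edges). Then the inverse degree ρ(G) = Σ_{v} 1/deg(v) satisfies (n−4)/2 + 4/3 ≤ ρ(G) ≤ (n−3) + 1/(n−1); the lower bound is attained by a graph with degree sequence (3^4, 2^{n−4}) and the upper bound by a graph with degree sequence (n−1, 3^3, 1^{n−4}). -/

import Mathlib

open Finset SimpleGraph


/-- The inverse degree of a graph on `Fin n`: the sum over all vertices of the
reciprocal of the degree. -/
noncomputable def inverseDegree {n : ℕ} (G : SimpleGraph (Fin n)) : ℝ :=
  ∑ v : Fin n, (1 : ℝ) / ((G.neighborSet v).ncard : ℝ)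

/-- `d` (0-indexed) is the degree sequence of `G`: some relabelling of the
vertices realizes the degrees `d 0, …, d (n-1)`. -/
def IsDegreeSequence {n : ℕ} (G : SimpleGraph (Fin n)) (d : ℕ → ℕ) : Prop :=
  ∃ σ : Equiv.Perm (Fin n), ∀ i : Fin n, (G.neighborSet (σ i)).ncard = d (i : ℕ)

section Helpers

def adj1 (n : ℕ) (u v : Fin n) : Prop :=
  u ≠ v ∧ (u.val + 1 = v.val ∨ v.val + 1 = u.val ∨
    (u.val = 0 ∧ v.val = n - 1) ∨ (v.val = 0 ∧ u.val = n - 1) ∨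
    (u.val = 0 ∧ v.val = 2) ∨ (v.val = 0 ∧ u.val = 2) ∨
    (u.val = 1 ∧ v.val = 3) ∨ (v.val = 1 ∧ u.val = 3))

def H1 (n : ℕ) : SimpleGraph (Fin n) where
  Adj := adj1 n
  symm := by constructor; intro u v ⟨h, h2⟩; exact ⟨h.symm, by tauto⟩
  loopless := by constructor; intro u ⟨h, _⟩; exact h rfl

lemma H1_adj {n : ℕ} (u v : Fin n) : (H1 n).Adj u v ↔ adj1 n u v := Iff.rfl

instance {n : ℕ} : DecidableRel (adj1 n) := fun u v => by
  unfold adj1; infer_instance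

instance {n : ℕ} : DecidableRel (H1 n).Adj := fun u v =>
  inferInstanceAs (Decidable (adj1 n u v))

lemma card3 {n : ℕ} (a b c : Fin n) (hab : a ≠ b) (hac : a ≠ c) (hbc : b ≠ c) :
    ({a, b, c} : Finset (Fin n)).card = 3 := by
  rw [Finset.card_insert_of_notMem (by simp [hab, hac]),
    Finset.card_insert_of_notMem (by simp [hbc]), Finset.card_singleton]

lemma card2 {n : ℕ} (a b : Fin n) (hab : a ≠ b) :
    ({a, b} : Finset (Fin n)).card = 2 := by
  rw [Finset.card_insert_of_notMem (by simp [hab]), Finset.card_singleton]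

lemma H1_degree {n : ℕ} (hn : 5 ≤ n) (v : Fin n) :
    (H1 n).degree v = if v.val < 4 then 3 else 2 := by
  have hv := v.isLt
  rcases Nat.lt_or_ge v.val 4 with h4 | h4
  · rw [if_pos h4]
    interval_cases h : v.val
    · have hne : (H1 n).neighborFinset v =
          {⟨1, by omega⟩, ⟨2, by omega⟩, ⟨n-1, by omega⟩} := by
        ext u
        simp only [mem_neighborFinset, H1_adj, adj1, Finset.mem_insert,
          Finset.mem_singleton, Fin.ext_iff, Ne]
        have := u.isLt
        omega
      rw [← card_neighborFinset_eq_degree, hne]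
      exact card3 _ _ _ (by simp only [ne_eq, Fin.mk.injEq]; omega)
        (by simp only [ne_eq, Fin.mk.injEq]; omega)
        (by simp only [ne_eq, Fin.mk.injEq]; omega)
    · have hne : (H1 n).neighborFinset v =
          {⟨0, by omega⟩, ⟨2, by omega⟩, ⟨3, by omega⟩} := by
        ext u
        simp only [mem_neighborFinset, H1_adj, adj1, Finset.mem_insert,
          Finset.mem_singleton, Fin.ext_iff, Ne]
        have := u.isLt
        omega
      rw [← card_neighborFinset_eq_degree, hne]
      exact card3 _ _ _ (by simp only [ne_eq, Fin.mk.injEq]; omega)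
        (by simp only [ne_eq, Fin.mk.injEq]; omega)
        (by simp only [ne_eq, Fin.mk.injEq]; omega)
    · have hne : (H1 n).neighborFinset v =
          {⟨0, by omega⟩, ⟨1, by omega⟩, ⟨3, by omega⟩} := by
        ext u
        simp only [mem_neighborFinset, H1_adj, adj1, Finset.mem_insert,
          Finset.mem_singleton, Fin.ext_iff, Ne]
        have := u.isLt
        omega
      rw [← card_neighborFinset_eq_degree, hne]
      exact card3 _ _ _ (by simp only [ne_eq, Fin.mk.injEq]; omega)
        (by simp only [ne_eq, Fin.mk.injEq]; omega)
        (by simp only [ne_eq, Fin.mk.injEq]; omega)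
    · have hne : (H1 n).neighborFinset v =
          {⟨1, by omega⟩, ⟨2, by omega⟩, ⟨4, by omega⟩} := by
        ext u
        simp only [mem_neighborFinset, H1_adj, adj1, Finset.mem_insert,
          Finset.mem_singleton, Fin.ext_iff, Ne]
        have := u.isLt
        omega
      rw [← card_neighborFinset_eq_degree, hne]
      exact card3 _ _ _ (by simp only [ne_eq, Fin.mk.injEq]; omega)
        (by simp only [ne_eq, Fin.mk.injEq]; omega)
        (by simp only [ne_eq, Fin.mk.injEq]; omega)
  · rw [if_neg (by omega)]
    rcases Nat.lt_or_ge v.val (n-1) with hlt | hge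
    · have hne : (H1 n).neighborFinset v =
          {⟨v.val - 1, by omega⟩, ⟨v.val + 1, by omega⟩} := by
        ext u
        simp only [mem_neighborFinset, H1_adj, adj1, Finset.mem_insert,
          Finset.mem_singleton, Fin.ext_iff, Ne]
        have := u.isLt
        omega
      rw [← card_neighborFinset_eq_degree, hne]
      exact card2 _ _ (by simp only [ne_eq, Fin.mk.injEq]; omega)
    · have hne : (H1 n).neighborFinset v =
          {⟨n - 2, by omega⟩, ⟨0, by omega⟩} := by
        ext u
        simp only [mem_neighborFinset, H1_adj, adj1, Finset.mem_insert,
          Finset.mem_singleton, Fin.ext_iff, Ne]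
        have := u.isLt
        omega
      rw [← card_neighborFinset_eq_degree, hne]
      exact card2 _ _ (by simp only [ne_eq, Fin.mk.injEq]; omega)

lemma H1_connected {n : ℕ} (hn : 5 ≤ n) : (H1 n).Connected := by
  have key : ∀ i (h : i < n), (H1 n).Reachable ⟨0, by omega⟩ ⟨i, h⟩ := by
    intro i
    induction i with
    | zero => exact fun h => Reachable.refl _
    | succ j ih =>
      intro h
      have hj : j < n := by omega
      refine (ih hj).trans (Adj.reachable ?_)
      exact ⟨by simp only [ne_eq, Fin.mk.injEq]; omega, Or.inl rfl⟩
  haveI : Nonempty (Fin n) := ⟨⟨0, by omega⟩⟩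
  refine ⟨fun u v => ?_⟩
  have hu := key u.val u.isLt
  have hv := key v.val v.isLt
  simp only [Fin.eta] at hu hv
  exact hu.symm.trans hv

def adj2 (n : ℕ) (u v : Fin n) : Prop :=
  u ≠ v ∧ (u.val = 0 ∨ v.val = 0 ∨ (u.val < 4 ∧ v.val < 4))

instance {n : ℕ} : DecidableRel (adj2 n) := fun u v => by
  unfold adj2; infer_instance

def H2 (n : ℕ) : SimpleGraph (Fin n) where
  Adj := adj2 n
  symm := by constructor; intro u v ⟨h, h2⟩; exact ⟨h.symm, by tauto⟩
  loopless := by constructor; intro u ⟨h, _⟩; exact h rfl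

lemma H2_adj {n : ℕ} (u v : Fin n) : (H2 n).Adj u v ↔ adj2 n u v := Iff.rfl

instance {n : ℕ} : DecidableRel (H2 n).Adj := fun u v =>
  inferInstanceAs (Decidable (adj2 n u v))

lemma H2_degree {n : ℕ} (hn : 5 ≤ n) (v : Fin n) :
    (H2 n).degree v = if v.val = 0 then n - 1 else if v.val < 4 then 3 else 1 := by
  have hv := v.isLt
  rcases eq_or_ne v.val 0 with h0 | h0
  · rw [if_pos h0]
    have hne : (H2 n).neighborFinset v = Finset.univ.erase v := by
      ext u
      simp only [mem_neighborFinset, H2_adj, adj2, Finset.mem_erase,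
        Finset.mem_univ, and_true, Ne, Fin.ext_iff]
      omega
    rw [← card_neighborFinset_eq_degree, hne, Finset.card_erase_of_mem (Finset.mem_univ v),
      Finset.card_univ, Fintype.card_fin]
  · rw [if_neg h0]
    rcases Nat.lt_or_ge v.val 4 with h4 | h4
    · rw [if_pos h4]
      interval_cases h : v.val
      · omega
      · have hne : (H2 n).neighborFinset v =
            {⟨0, by omega⟩, ⟨2, by omega⟩, ⟨3, by omega⟩} := by
          ext u
          simp only [mem_neighborFinset, H2_adj, adj2, Finset.mem_insert,
            Finset.mem_singleton, Fin.ext_iff, Ne]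
          have := u.isLt
          omega
        rw [← card_neighborFinset_eq_degree, hne]
        exact card3 _ _ _ (by simp only [ne_eq, Fin.mk.injEq]; omega)
          (by simp only [ne_eq, Fin.mk.injEq]; omega)
          (by simp only [ne_eq, Fin.mk.injEq]; omega)
      · have hne : (H2 n).neighborFinset v =
            {⟨0, by omega⟩, ⟨1, by omega⟩, ⟨3, by omega⟩} := by
          ext u
          simp only [mem_neighborFinset, H2_adj, adj2, Finset.mem_insert,
            Finset.mem_singleton, Fin.ext_iff, Ne]
          have := u.isLt
          omega
        rw [← card_neighborFinset_eq_degree, hne]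
        exact card3 _ _ _ (by simp only [ne_eq, Fin.mk.injEq]; omega)
          (by simp only [ne_eq, Fin.mk.injEq]; omega)
          (by simp only [ne_eq, Fin.mk.injEq]; omega)
      · have hne : (H2 n).neighborFinset v =
            {⟨0, by omega⟩, ⟨1, by omega⟩, ⟨2, by omega⟩} := by
          ext u
          simp only [mem_neighborFinset, H2_adj, adj2, Finset.mem_insert,
            Finset.mem_singleton, Fin.ext_iff, Ne]
          have := u.isLt
          omega
        rw [← card_neighborFinset_eq_degree, hne]
        exact card3 _ _ _ (by simp only [ne_eq, Fin.mk.injEq]; omega)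
          (by simp only [ne_eq, Fin.mk.injEq]; omega)
          (by simp only [ne_eq, Fin.mk.injEq]; omega)
    · rw [if_neg (by omega)]
      have hne : (H2 n).neighborFinset v = {⟨0, by omega⟩} := by
        ext u
        simp only [mem_neighborFinset, H2_adj, adj2, Finset.mem_singleton,
          Fin.ext_iff, Ne]
        have := u.isLt
        omega
      rw [← card_neighborFinset_eq_degree, hne, Finset.card_singleton]

lemma H2_connected {n : ℕ} (hn : 5 ≤ n) : (H2 n).Connected := by
  haveI : Nonempty (Fin n) := ⟨⟨0, by omega⟩⟩
  have key : ∀ v : Fin n, v.val ≠ 0 → (H2 n).Adj ⟨0, by omega⟩ v := by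
    intro v hv
    exact ⟨by simp only [ne_eq, Fin.ext_iff]; omega, Or.inl rfl⟩
  refine ⟨fun u v => ?_⟩
  rcases eq_or_ne u.val 0 with h0 | h0
  · rcases eq_or_ne v.val 0 with h1 | h1
    · have : u = v := Fin.ext (by omega)
      exact this ▸ Reachable.refl u
    · have : u = ⟨0, by omega⟩ := Fin.ext h0
      exact this ▸ (key v h1).reachable
  · rcases eq_or_ne v.val 0 with h1 | h1
    · have : v = ⟨0, by omega⟩ := Fin.ext h1
      exact this ▸ ((key u h0).symm.reachable)
    · exact ((key u h0).symm.reachable).trans (key v h1).reachable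

lemma ncard_nbhd' {n : ℕ} (G : SimpleGraph (Fin n)) [DecidableRel G.Adj] (v : Fin n) :
    (G.neighborSet v).ncard = G.degree v := by
  rw [Set.ncard_eq_toFinset_card']; rfl

lemma inverseDegree_eq {n : ℕ} (G : SimpleGraph (Fin n)) [DecidableRel G.Adj] :
    inverseDegree G = ∑ v : Fin n, (1 : ℝ) / (G.degree v : ℝ) := by
  unfold inverseDegree
  simp_rw [ncard_nbhd']

lemma edge_ncard_eq {n : ℕ} (G : SimpleGraph (Fin n)) [DecidableRel G.Adj] :
    G.edgeSet.ncard = G.edgeFinset.card := by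
  rw [Set.ncard_eq_toFinset_card']
  congr 1

lemma sum_split {M : Type*} [AddCommMonoid M] (n a : ℕ) (h : a ≤ n) (f : ℕ → M) :
    ∑ i ∈ Finset.range n, f i
      = (∑ i ∈ Finset.range a, f i) + ∑ i ∈ Finset.Ico a n, f i := by
  have h2 := Finset.sum_Ico_consecutive f (Nat.zero_le a) h
  rw [Finset.range_eq_Ico, Finset.range_eq_Ico]
  exact h2.symm

lemma H1_edges {n : ℕ} (hn : 5 ≤ n) : (H1 n).edgeSet.ncard = n + 2 := by
  have hsum : ∑ v : Fin n, (H1 n).degree v = 2 * (n + 2) := by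
    have h1 : ∀ v : Fin n, (H1 n).degree v = (fun i : ℕ => if i < 4 then 3 else 2) v.val :=
      fun v => H1_degree hn v
    have e2 : ∑ i ∈ Finset.Ico 4 n, (if i < 4 then 3 else 2)
        = (n - 4) * 2 := by
      rw [Finset.sum_congr rfl
          (fun i hi => if_neg (by simp only [Finset.mem_Ico] at hi; omega)),
        Finset.sum_const, Nat.card_Ico, smul_eq_mul]
    have e1 : ∑ i ∈ Finset.range 4, (if i < 4 then 3 else 2) = 12 := by decide
    rw [Finset.sum_congr rfl (fun v _ => h1 v),
      Fin.sum_univ_eq_sum_range (fun i : ℕ => if i < 4 then 3 else 2) n,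
      sum_split n 4 (by omega), e1, e2]
    omega
  rw [edge_ncard_eq]
  have := (H1 n).sum_degrees_eq_twice_card_edges
  omega

lemma H2_edges {n : ℕ} (hn : 5 ≤ n) : (H2 n).edgeSet.ncard = n + 2 := by
  have hsum : ∑ v : Fin n, (H2 n).degree v = 2 * (n + 2) := by
    have h1 : ∀ v : Fin n, (H2 n).degree v
        = (fun i : ℕ => if i = 0 then n - 1 else if i < 4 then 3 else 1) v.val :=
      fun v => H2_degree hn v
    have e2 : ∑ i ∈ Finset.Ico 4 n, (if i = 0 then n - 1 else if i < 4 then 3 else 1)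
        = (n - 4) * 1 := by
      rw [Finset.sum_congr rfl
          (fun i hi => by
            simp only [Finset.mem_Ico] at hi
            rw [if_neg (by omega), if_neg (by omega)]),
        Finset.sum_const, Nat.card_Ico, smul_eq_mul]
    have e1 : ∑ i ∈ Finset.range 4, (if i = 0 then n - 1 else if i < 4 then 3 else 1)
        = (n - 1) + 9 := by
      simp [Finset.sum_range_succ]
    rw [Finset.sum_congr rfl (fun v _ => h1 v),
      Fin.sum_univ_eq_sum_range (fun i : ℕ => if i = 0 then n - 1 else if i < 4 then 3 else 1) n,
      sum_split n 4 (by omega), e1, e2]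
    omega
  rw [edge_ncard_eq]
  have := (H2 n).sum_degrees_eq_twice_card_edges
  omega

lemma H1_inverseDegree {n : ℕ} (hn : 5 ≤ n) :
    inverseDegree (H1 n) = ((n : ℝ) - 4) / 2 + 4 / 3 := by
  rw [inverseDegree_eq]
  have h1 : ∀ v : Fin n, (1 : ℝ) / ((H1 n).degree v : ℝ)
      = (fun i : ℕ => if i < 4 then (1:ℝ)/3 else 1/2) v.val := by
    intro v
    rw [H1_degree hn v]
    by_cases h : v.val < 4 <;> simp [h]
  have e2 : ∑ i ∈ Finset.Ico 4 n, (if i < 4 then (1:ℝ)/3 else 1/2)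
      = ((n : ℝ) - 4) * (1/2) := by
    rw [Finset.sum_congr rfl
        (fun i hi => if_neg (by simp only [Finset.mem_Ico] at hi; omega)),
      Finset.sum_const, Nat.card_Ico, nsmul_eq_mul, Nat.cast_sub (by omega)]
    norm_num
  have e1 : ∑ i ∈ Finset.range 4, (if i < 4 then (1:ℝ)/3 else 1/2) = 4/3 := by
    simp [Finset.sum_range_succ]
    norm_num
  rw [Finset.sum_congr rfl (fun v _ => h1 v),
    Fin.sum_univ_eq_sum_range (fun i : ℕ => if i < 4 then (1:ℝ)/3 else 1/2) n,
    sum_split n 4 (by omega), e1, e2]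
  ring

lemma H2_inverseDegree {n : ℕ} (hn : 5 ≤ n) :
    inverseDegree (H2 n) = ((n : ℝ) - 3) + 1 / ((n : ℝ) - 1) := by
  rw [inverseDegree_eq]
  have h1 : ∀ v : Fin n, (1 : ℝ) / ((H2 n).degree v : ℝ)
      = (fun i : ℕ => if i = 0 then 1/((n:ℝ)-1) else if i < 4 then (1:ℝ)/3 else 1) v.val := by
    intro v
    rw [H2_degree hn v]
    rcases eq_or_ne v.val 0 with h0 | h0
    · simp [h0, Nat.cast_sub (by omega : 1 ≤ n)]
    · by_cases h : v.val < 4 <;> simp [h0, h]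
  have e2 : ∑ i ∈ Finset.Ico 4 n,
      (if i = 0 then 1/((n:ℝ)-1) else if i < 4 then (1:ℝ)/3 else 1)
      = ((n : ℝ) - 4) * 1 := by
    rw [Finset.sum_congr rfl
        (fun i hi => by
          simp only [Finset.mem_Ico] at hi
          rw [if_neg (by omega), if_neg (by omega)]),
      Finset.sum_const, Nat.card_Ico, nsmul_eq_mul, Nat.cast_sub (by omega)]
    norm_num
  have e1 : ∑ i ∈ Finset.range 4,
      (if i = 0 then 1/((n:ℝ)-1) else if i < 4 then (1:ℝ)/3 else 1)
      = 1/((n:ℝ)-1) + 1 := by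
    simp [Finset.sum_range_succ]
    ring
  rw [Finset.sum_congr rfl (fun v _ => h1 v),
    Fin.sum_univ_eq_sum_range
      (fun i : ℕ => if i = 0 then 1/((n:ℝ)-1) else if i < 4 then (1:ℝ)/3 else 1) n,
    sum_split n 4 (by omega), e1, e2]
  ring

lemma H1_degSeq {n : ℕ} (hn : 5 ≤ n) :
    IsDegreeSequence (H1 n) (fun i => if i < 4 then 3 else 2) := by
  refine ⟨Equiv.refl _, fun i => ?_⟩
  rw [Equiv.refl_apply, ncard_nbhd', H1_degree hn]

lemma H2_degSeq {n : ℕ} (hn : 5 ≤ n) :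
    IsDegreeSequence (H2 n) (fun i => if i = 0 then n - 1 else if i < 4 then 3 else 1) := by
  refine ⟨Equiv.refl _, fun i => ?_⟩
  rw [Equiv.refl_apply, ncard_nbhd', H2_degree hn]


lemma inv_ge_lin (d : ℕ) (hd : 1 ≤ d) : (5:ℝ)/6 - (d:ℝ)/6 ≤ 1/(d:ℝ) := by
  have hd0 : (0:ℝ) < d := by exact_mod_cast hd
  rw [le_div_iff₀ hd0]
  rcases le_or_gt d 2 with h | h
  · have h2 : (d:ℝ) ≤ 2 := by exact_mod_cast h
    nlinarith [mul_nonneg (sub_nonneg.2 h2) (by linarith : (0:ℝ) ≤ 3 - d)]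
  · have h3 : (3:ℝ) ≤ d := by exact_mod_cast h
    nlinarith [mul_nonneg (by linarith : (0:ℝ) ≤ (d:ℝ) - 2) (by linarith : (0:ℝ) ≤ (d:ℝ) - 3)]

lemma chord_ineq (b d n : ℕ) (hb : 1 ≤ b) (h2 : b ≤ d) (hd : d ≤ n - 1) (hn : 5 ≤ n) :
    (1:ℝ)/(d:ℝ) ≤ 1/(b:ℝ) - ((d:ℝ) - b)/((b:ℝ)*((n:ℝ)-1)) := by
  have hb0 : (0:ℝ) < b := by exact_mod_cast hb
  have hd0 : (0:ℝ) < d := by exact_mod_cast (lt_of_lt_of_le hb h2)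
  have hn1 : (0:ℝ) < (n:ℝ) - 1 := by
    have : (5:ℝ) ≤ n := by exact_mod_cast hn
    linarith
  have hdn : (d:ℝ) ≤ (n:ℝ) - 1 := by
    have : (d:ℝ) ≤ ((n - 1 : ℕ) : ℝ) := by exact_mod_cast hd
    rw [Nat.cast_sub (by omega)] at this
    simpa using this
  have hbd : (b:ℝ) ≤ d := by exact_mod_cast h2
  rw [← sub_nonneg]
  have key : 1/(b:ℝ) - ((d:ℝ) - b)/((b:ℝ)*((n:ℝ)-1)) - 1/(d:ℝ)
      = (((d:ℝ) - b) * (((n:ℝ)-1) - d)) / ((b:ℝ) * d * ((n:ℝ)-1)) := by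
    field_simp
    ring
  rw [key]
  apply div_nonneg
  · exact mul_nonneg (by linarith) (by linarith)
  · positivity

lemma degree_pos_of_connected' {n : ℕ} (G : SimpleGraph (Fin n)) [DecidableRel G.Adj]
    (hconn : G.Connected) (hn : 2 ≤ n) (v : Fin n) : 0 < G.degree v := by
  rw [G.degree_pos_iff_exists_adj]
  have : ∃ w : Fin n, w ≠ v := by
    refine ⟨if v = ⟨0, by omega⟩ then ⟨1, by omega⟩ else ⟨0, by omega⟩, ?_⟩
    split <;> simp_all [Fin.ext_iff] <;> omega
  obtain ⟨w, hw⟩ := this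
  obtain ⟨p⟩ := hconn.preconnected v w
  cases p with
  | nil => exact absurd rfl hw.symm
  | cons h q => exact ⟨_, h⟩

lemma lower_bound {n : ℕ} (hn : 5 ≤ n) (G : SimpleGraph (Fin n)) [DecidableRel G.Adj]
    (hdeg : ∀ v, 1 ≤ G.degree v) (hsum : ∑ v, G.degree v = 2 * n + 4) :
    ((n:ℝ) - 4)/2 + 4/3 ≤ ∑ v : Fin n, 1/(G.degree v : ℝ) := by
  have hcast : ∑ v : Fin n, (G.degree v : ℝ) = 2*(n:ℝ) + 4 := by
    rw [← Nat.cast_sum, hsum]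
    push_cast
    ring
  have h1 : ∑ v : Fin n, ((5:ℝ)/6 - (G.degree v : ℝ)/6)
      = (n:ℝ)*(5/6) - (2*(n:ℝ)+4)/6 := by
    rw [Finset.sum_sub_distrib, Finset.sum_const, Finset.card_univ, Fintype.card_fin,
      ← Finset.sum_div, hcast, nsmul_eq_mul]
  have h2 : ∑ v : Fin n, ((5:ℝ)/6 - (G.degree v : ℝ)/6) ≤ ∑ v : Fin n, 1/(G.degree v : ℝ) :=
    Finset.sum_le_sum (fun v _ => inv_ge_lin _ (hdeg v))
  rw [h1] at h2
  linarith

lemma no_adj_leaves {n : ℕ} (hn : 5 ≤ n) (G : SimpleGraph (Fin n)) [DecidableRel G.Adj]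
    (hconn : G.Connected) {u w : Fin n} (hadj : G.Adj u w)
    (hu : G.degree u = 1) (hw : G.degree w = 1) : False := by
  have hNu : G.neighborFinset u = {w} := by
    obtain ⟨a, ha⟩ := Finset.card_eq_one.mp hu
    have hwm : w ∈ G.neighborFinset u := (G.mem_neighborFinset u w).mpr hadj
    rw [ha] at hwm ⊢
    rw [Finset.mem_singleton] at hwm
    rw [hwm]
  have hNw : G.neighborFinset w = {u} := by
    obtain ⟨a, ha⟩ := Finset.card_eq_one.mp hw
    have hwm : u ∈ G.neighborFinset w := (G.mem_neighborFinset w u).mpr hadj.symm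
    rw [ha] at hwm ⊢
    rw [Finset.mem_singleton] at hwm
    rw [hwm]
  have step : ∀ a b : Fin n, G.Adj a b → (a = u ∨ a = w) → (b = u ∨ b = w) := by
    rintro a b hab (rfl | rfl)
    · right
      have : b ∈ G.neighborFinset a := (G.mem_neighborFinset a b).mpr hab
      rw [hNu, Finset.mem_singleton] at this
      exact this
    · left
      have : b ∈ G.neighborFinset a := (G.mem_neighborFinset a b).mpr hab
      rw [hNw, Finset.mem_singleton] at this
      exact this
  have reach : ∀ (x y : Fin n) (p : G.Walk x y), (x = u ∨ x = w) → (y = u ∨ y = w) := by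
    intro x y p
    induction p with
    | nil => exact id
    | cons h q ih => exact fun hx => ih (step _ _ h hx)
  have hex : ∃ z : Fin n, z ≠ u ∧ z ≠ w := by
    have h2 : ¬ (Finset.univ : Finset (Fin n)) ⊆ {u, w} := by
      intro hsub
      have hc := Finset.card_le_card hsub
      have hc2 : ({u, w} : Finset (Fin n)).card ≤ 2 :=
        le_trans (Finset.card_insert_le u {w}) (by simp)
      simp only [Finset.card_univ, Fintype.card_fin] at hc
      omega
    obtain ⟨z, -, hz⟩ := Finset.not_subset.mp h2
    simp only [Finset.mem_insert, Finset.mem_singleton, not_or] at hz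
    exact ⟨z, hz.1, hz.2⟩
  obtain ⟨z, hzu, hzw⟩ := hex
  obtain ⟨p⟩ := hconn.preconnected u z
  rcases reach _ _ p (Or.inl rfl) with h | h
  · exact hzu h
  · exact hzw h

lemma upper_bound {n : ℕ} (hn : 5 ≤ n) (G : SimpleGraph (Fin n)) [DecidableRel G.Adj]
    (hconn : G.Connected) (hsum : ∑ v, G.degree v = 2 * n + 4) :
    ∑ v : Fin n, 1/(G.degree v : ℝ) ≤ ((n:ℝ) - 3) + 1/((n:ℝ) - 1) := by
  set L : Finset (Fin n) := Finset.univ.filter (fun v => G.degree v = 1) with hL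
  set C : Finset (Fin n) := Finset.univ.filter (fun v => ¬ G.degree v = 1) with hC
  set k := L.card with hk
  set m := C.card with hm
  have hkm : k + m = n := by
    rw [hk, hm, hL, hC, Finset.card_filter_add_card_filter_not,
      Finset.card_univ, Fintype.card_fin]
  have hdeg1 : ∀ v, 1 ≤ G.degree v := fun v => degree_pos_of_connected' G hconn (by omega) v
  have hmemL : ∀ u ∈ L, G.degree u = 1 := by
    intro u hu; rw [hL, Finset.mem_filter] at hu; exact hu.2
  have hmemC : ∀ v ∈ C, 2 ≤ G.degree v := by
    intro v hv; rw [hC, Finset.mem_filter] at hv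
    have := hdeg1 v; omega
  have hdegn : ∀ v, G.degree v ≤ n - 1 := by
    intro v
    have := G.degree_lt_card_verts v
    rw [Fintype.card_fin] at this
    omega
  -- indicator
  set e : Fin n → Fin n → ℕ := fun v u => if G.Adj v u then 1 else 0 with he
  have hdeg_split : ∀ v, G.degree v = (∑ u ∈ L, e v u) + (∑ u ∈ C, e v u) := by
    intro v
    rw [hL, hC, Finset.sum_filter_add_sum_filter_not]
    rw [SimpleGraph.degree, SimpleGraph.neighborFinset_eq_filter, Finset.card_filter]
  -- leaves: no leaf-leaf edges, unique neighbor in C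
  have hLe : ∀ u ∈ L, (∑ w ∈ L, e u w) = 0 := by
    intro u hu
    apply Finset.sum_eq_zero
    intro w hw
    rw [he]
    simp only
    rw [if_neg]
    intro hadj
    exact no_adj_leaves hn G hconn hadj (hmemL u hu) (hmemL w hw)
  have hCL : ∀ u ∈ L, (∑ w ∈ C, e u w) = 1 := by
    intro u hu
    have h1 := hdeg_split u
    rw [hmemL u hu, hLe u hu] at h1
    omega
  -- double counting
  have hdc : ∑ v ∈ C, (∑ u ∈ L, e v u) = k := by
    rw [Finset.sum_comm]
    have : ∀ u ∈ L, (∑ v ∈ C, e v u) = 1 := by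
      intro u hu
      rw [← hCL u hu]
      apply Finset.sum_congr rfl
      intro w hw
      simp only [he, G.adj_comm]
    rw [Finset.sum_congr rfl this, Finset.sum_const, smul_eq_mul, mul_one]
  -- sum of degrees over L and C
  have hsumL : ∑ v ∈ L, G.degree v = k := by
    rw [Finset.sum_congr rfl hmemL, Finset.sum_const, smul_eq_mul, mul_one]
  set SC := ∑ v ∈ C, G.degree v with hSC
  have hSCk : SC + k = 2 * n + 4 := by
    rw [hSC, ← hsumL, ← hsum, hL, hC]
    rw [add_comm]
    exact Finset.sum_filter_add_sum_filter_not _ _ _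
  -- DC : internal degree sum
  set DC := ∑ v ∈ C, (∑ u ∈ C, e v u) with hDC
  have hDCval : DC + k + k = 2 * n + 4 := by
    have : SC = ∑ v ∈ C, ((∑ u ∈ L, e v u) + (∑ u ∈ C, e v u)) :=
      Finset.sum_congr rfl (fun v _ => hdeg_split v)
    rw [Finset.sum_add_distrib, hdc, ← hDC] at this
    omega
  have hCd : ∀ v ∈ C, (∑ u ∈ C, e v u) ≤ m - 1 := by
    intro v hv
    rw [← Finset.sum_erase_add C _ hv]
    have h0 : e v v = 0 := by simp [he]
    rw [h0, add_zero]
    calc ∑ u ∈ C.erase v, e v u ≤ ∑ u ∈ C.erase v, 1 :=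
          Finset.sum_le_sum (fun u _ => by simp [he]; split <;> omega)
      _ = (C.erase v).card := by rw [Finset.sum_const, smul_eq_mul, mul_one]
      _ = m - 1 := by rw [Finset.card_erase_of_mem hv, hm]
  have hm4 : 4 ≤ m := by
    have hle : DC ≤ m * (m - 1) := by
      rw [hDC]
      calc ∑ v ∈ C, (∑ u ∈ C, e v u) ≤ ∑ v ∈ C, (m - 1) :=
            Finset.sum_le_sum hCd
        _ = m * (m-1) := by rw [Finset.sum_const, smul_eq_mul, hm]
    by_contra h
    push_neg at h
    interval_cases m <;> omega
  -- split the inverse-degree sum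
  have hsplit : ∑ v : Fin n, 1/(G.degree v:ℝ) = (k:ℝ) + ∑ v ∈ C, 1/(G.degree v:ℝ) := by
    have h1 : (∑ v ∈ L, 1/(G.degree v:ℝ)) + (∑ v ∈ C, 1/(G.degree v:ℝ))
        = ∑ v : Fin n, 1/(G.degree v:ℝ) := by
      rw [hL, hC]
      exact Finset.sum_filter_add_sum_filter_not _ _ _
    have h2 : ∑ v ∈ L, 1/(G.degree v:ℝ) = (k:ℝ) := by
      rw [Finset.sum_congr rfl (fun v hv => by rw [hmemL v hv, Nat.cast_one, div_one]),
        Finset.sum_const, nsmul_eq_mul, mul_one, hk]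
    rw [← h1, h2]
  have hDreal : ∑ v ∈ C, (G.degree v : ℝ) = (SC:ℝ) := (Nat.cast_sum _ _).symm
  have hkR : (k:ℝ) + (m:ℝ) = (n:ℝ) := by exact_mod_cast hkm
  have hSCR : (SC:ℝ) + (k:ℝ) = 2*(n:ℝ) + 4 := by exact_mod_cast hSCk
  have hn1 : ((n:ℝ) - 1) ≠ 0 := by
    have : (5:ℝ) ≤ n := by exact_mod_cast hn
    intro h; linarith [this]
  have hn5 : (5:ℝ) ≤ (n:ℝ) := by exact_mod_cast hn
  rcases eq_or_lt_of_le hm4 with h4 | h5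
  · -- m = 4 : core is K4, all core degrees ≥ 3
    have hDC12 : DC = 12 := by omega
    have heach : ∀ v ∈ C, (∑ u ∈ C, e v u) = 3 := by
      by_contra hco
      push_neg at hco
      obtain ⟨v, hv, hne⟩ := hco
      have hlt : DC < ∑ _v ∈ C, 3 := by
        rw [hDC]
        refine Finset.sum_lt_sum (fun i hi => ?_) ⟨v, hv, ?_⟩
        · have := hCd i hi; omega
        · have := hCd v hv; omega
      rw [Finset.sum_const, smul_eq_mul, ← hm, ← h4] at hlt
      omega
    have hall : ∀ v ∈ C, 3 ≤ G.degree v := by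
      intro v hv
      have := hdeg_split v
      rw [heach v hv] at this
      omega
    have hchord : ∀ v ∈ C, 1/(G.degree v:ℝ)
        ≤ 1/3 - ((G.degree v:ℝ) - 3)/(3*((n:ℝ)-1)) := by
      intro v hv
      have h := chord_ineq 3 (G.degree v) n (by norm_num) (hall v hv) (hdegn v) hn
      push_cast at h
      convert h using 2 <;> norm_num
    have hsumC : ∑ v ∈ C, 1/(G.degree v:ℝ)
        ≤ (m:ℝ)*(1/3) - ((SC:ℝ) - 3*(m:ℝ))/(3*((n:ℝ)-1)) := by
      calc ∑ v ∈ C, 1/(G.degree v:ℝ)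
          ≤ ∑ v ∈ C, (1/3 - ((G.degree v:ℝ) - 3)/(3*((n:ℝ)-1))) :=
            Finset.sum_le_sum hchord
        _ = (m:ℝ)*(1/3) - ((SC:ℝ) - 3*(m:ℝ))/(3*((n:ℝ)-1)) := by
            rw [Finset.sum_sub_distrib, Finset.sum_const, ← Finset.sum_div,
              Finset.sum_sub_distrib, Finset.sum_const, hDreal, ← hm, nsmul_eq_mul,
              nsmul_eq_mul]
            ring
    have hm4R : (m:ℝ) = 4 := by rw [← h4]; norm_num
    have hkeq : (k:ℝ) = (n:ℝ) - 4 := by linarith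
    have hSCeq : (SC:ℝ) = (n:ℝ) + 8 := by linarith
    have hfin : (k:ℝ) + ((m:ℝ)*(1/3) - ((SC:ℝ) - 3*(m:ℝ))/(3*((n:ℝ)-1)))
        = ((n:ℝ) - 3) + 1/((n:ℝ) - 1) := by
      rw [hkeq, hSCeq, hm4R]
      field_simp
      ring
    rw [hsplit]
    linarith [hsumC]
  · -- m ≥ 5
    have hchord : ∀ v ∈ C, 1/(G.degree v:ℝ)
        ≤ 1/2 - ((G.degree v:ℝ) - 2)/(2*((n:ℝ)-1)) := by
      intro v hv
      have h := chord_ineq 2 (G.degree v) n (by norm_num) (hmemC v hv) (hdegn v) hn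
      push_cast at h
      convert h using 2 <;> norm_num
    have hsumC : ∑ v ∈ C, 1/(G.degree v:ℝ)
        ≤ (m:ℝ)*(1/2) - ((SC:ℝ) - 2*(m:ℝ))/(2*((n:ℝ)-1)) := by
      calc ∑ v ∈ C, 1/(G.degree v:ℝ)
          ≤ ∑ v ∈ C, (1/2 - ((G.degree v:ℝ) - 2)/(2*((n:ℝ)-1))) :=
            Finset.sum_le_sum hchord
        _ = (m:ℝ)*(1/2) - ((SC:ℝ) - 2*(m:ℝ))/(2*((n:ℝ)-1)) := by
            rw [Finset.sum_sub_distrib, Finset.sum_const, ← Finset.sum_div,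
              Finset.sum_sub_distrib, Finset.sum_const, hDreal, ← hm, nsmul_eq_mul,
              nsmul_eq_mul]
            ring
    have hm5 : (5:ℝ) ≤ (m:ℝ) := by exact_mod_cast h5
    have hkey : ((n:ℝ) - 3) + 1/((n:ℝ) - 1)
        - ((k:ℝ) + ((m:ℝ)*(1/2) - ((SC:ℝ) - 2*(m:ℝ))/(2*((n:ℝ)-1))))
        = (((m:ℝ) - 5)*((n:ℝ) - 2) + 2)/(2*((n:ℝ)-1)) := by
      have hkeq : (k:ℝ) = (n:ℝ) - (m:ℝ) := by linarith
      have hSCeq : (SC:ℝ) = (n:ℝ) + 4 + (m:ℝ) := by linarith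
      rw [hkeq, hSCeq]
      field_simp
      ring
    have hpos : (0:ℝ) ≤ (((m:ℝ) - 5)*((n:ℝ) - 2) + 2)/(2*((n:ℝ)-1)) := by
      apply div_nonneg
      · nlinarith
      · linarith
    rw [hsplit]
    linarith [hsumC, hkey ▸ hpos]

end Helpers

/-- Bounds for the inverse degree of a tricyclic graph:
`(n-4)/2 + 4/3 ≤ ρ(G) ≤ (n-3) + 1/(n-1)`, with the lower bound attained by a
tricyclic graph with degree sequence `(3^4, 2^{n-4})` and the upper bound by a
tricyclic graph with degree sequence `(n-1, 3^3, 1^{n-4})`. -/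
theorem tricyclic_inverse_degree_bounds (n : ℕ) (hn : 5 ≤ n)
    (G : SimpleGraph (Fin n)) (hconn : G.Connected)
    (hedges : G.edgeSet.ncard = n + 2) :
    (((n : ℝ) - 4) / 2 + 4 / 3 ≤ inverseDegree G ∧
      inverseDegree G ≤ ((n : ℝ) - 3) + 1 / ((n : ℝ) - 1)) ∧
    (∃ H : SimpleGraph (Fin n), H.Connected ∧ H.edgeSet.ncard = n + 2 ∧
      IsDegreeSequence H (fun i => if i < 4 then 3 else 2) ∧
      inverseDegree H = ((n : ℝ) - 4) / 2 + 4 / 3) ∧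
    (∃ H : SimpleGraph (Fin n), H.Connected ∧ H.edgeSet.ncard = n + 2 ∧
      IsDegreeSequence H
        (fun i => if i = 0 then n - 1 else if i < 4 then 3 else 1) ∧
      inverseDegree H = ((n : ℝ) - 3) + 1 / ((n : ℝ) - 1)) := by
  haveI : DecidableRel G.Adj := Classical.decRel _
  have hcard : G.edgeFinset.card = n + 2 := by rw [← edge_ncard_eq]; exact hedges
  have hsum : ∑ v, G.degree v = 2 * n + 4 := by
    have := G.sum_degrees_eq_twice_card_edges
    omega
  have hdeg : ∀ v, 1 ≤ G.degree v :=
    fun v => degree_pos_of_connected' G hconn (by omega) v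
  refine ⟨⟨?_, ?_⟩,
    ⟨H1 n, H1_connected hn, H1_edges hn, H1_degSeq hn, H1_inverseDegree hn⟩,
    ⟨H2 n, H2_connected hn, H2_edges hn, H2_degSeq hn, H2_inverseDegree hn⟩⟩
  · rw [inverseDegree_eq]
    exact lower_bound hn G hdeg hsum
  · rw [inverseDegree_eq]
    exact upper_bound hn G hconn hsum
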